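/- Let P ⊂ ℝⁿ be a compact convex polytope containing 0 in its interior, and let Π be the L²(P)-orthogonal projection onto the (finite-dimensional) space of affine functions. Then there is a constant C > 0 such that every nonnegative continuous convex function f on P with f(0) = 0 satisfies ‖f‖_{L²(P)} ≤ C·‖f − Π(f)‖_{L²(P)}. -/

import Mathlib

open MeasureTheory

lemma cs_integral {α : Type*} [MeasurableSpace α] (μ : Measure α)
    (h₁ h₂ : α → ℝ) (i1 : Integrable (fun x => h₁ x ^ 2) μ)
    (i2 : Integrable (fun x => h₂ x ^ 2) μ)
    (i12 : Integrable (fun x => h₁ x * h₂ x) μ) :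
    (∫ x, h₁ x * h₂ x ∂μ) ^ 2 ≤ (∫ x, h₁ x ^ 2 ∂μ) * (∫ x, h₂ x ^ 2 ∂μ) := by
  set A := ∫ x, h₁ x ^ 2 ∂μ with hAdef
  set B := ∫ x, h₁ x * h₂ x ∂μ with hBdef
  set Cc := ∫ x, h₂ x ^ 2 ∂μ with hCdef
  have key : ∀ t : ℝ, 0 ≤ A * (t * t) + (2 * B) * t + Cc := by
    intro t
    have h0 : 0 ≤ ∫ x, (t * h₁ x + h₂ x) ^ 2 ∂μ := integral_nonneg fun x => sq_nonneg _
    have expand : (fun x => (t * h₁ x + h₂ x) ^ 2)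
        = fun x => t ^ 2 * h₁ x ^ 2 + ((2 * t) * (h₁ x * h₂ x) + h₂ x ^ 2) := by
      funext x; ring
    have e1 : ∫ x, (t ^ 2 * h₁ x ^ 2 + ((2 * t) * (h₁ x * h₂ x) + h₂ x ^ 2)) ∂μ
        = t ^ 2 * A + ((2 * t) * B + Cc) := by
      have ia : Integrable (fun x => (2 * t) * (h₁ x * h₂ x) + h₂ x ^ 2) μ :=
        (i12.const_mul _).add i2
      rw [integral_add (i1.const_mul _) ia, integral_add (i12.const_mul _) i2,
        integral_const_mul, integral_const_mul]
    rw [expand, e1] at h0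
    nlinarith [h0]
  have hd := discrim_le_zero key
  rw [discrim] at hd
  nlinarith [hd]
open MeasureTheory Metric

lemma affine_avg {n : ℕ} (g : EuclideanSpace ℝ (Fin n) →ᵃ[ℝ] ℝ)
    (y : EuclideanSpace ℝ (Fin n)) {ρ : ℝ} (hρ : 0 ≤ ρ) :
    ∫ x in closedBall y ρ, g x =
      (volume (closedBall (0 : EuclideanSpace ℝ (Fin n)) ρ)).toReal * g y := by
  let E := EuclideanSpace ℝ (Fin n)
  set L : EuclideanSpace ℝ (Fin n) →ₗ[ℝ] ℝ := g.linear with hL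
  have hLc : Continuous L := L.continuous_of_finiteDimensional
  have hgx : ∀ x : EuclideanSpace ℝ (Fin n), g x = L (x - y) + g y := by
    intro x
    conv_lhs => rw [show x = (x - y) +ᵥ y by simp]
    rw [AffineMap.map_vadd]
    rfl
  have hized : IntegrableOn (fun x : EuclideanSpace ℝ (Fin n) => L (x - y)) (closedBall y ρ) volume :=
    (hLc.comp (continuous_id.sub continuous_const)).continuousOn.integrableOn_compact
      (isCompact_closedBall y ρ)
  have hsplit : ∫ x in closedBall y ρ, g x
      = (∫ x in closedBall y ρ, L (x - y)) + ∫ x in closedBall y ρ, (g y : ℝ) := by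
    rw [← integral_add hized (integrableOn_const measure_closedBall_lt_top.ne)]
    exact setIntegral_congr_fun measurableSet_closedBall fun x _ => hgx x
  have hodd : ∫ x in closedBall y ρ, L (x - y) = 0 := by
    set φ : EuclideanSpace ℝ (Fin n) → ℝ := Set.indicator (closedBall (0 : EuclideanSpace ℝ (Fin n)) ρ) L with hφ
    have h1 : ∫ x in closedBall y ρ, L (x - y) = ∫ x, φ (x - y) := by
      rw [← integral_indicator measurableSet_closedBall]
      congr 1
      funext x
      by_cases hx : x ∈ closedBall y ρ
      · rw [Set.indicator_of_mem hx, hφ, Set.indicator_of_mem]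
        simpa [dist_eq_norm] using hx
      · rw [Set.indicator_of_notMem hx, hφ, Set.indicator_of_notMem]
        intro hmem
        apply hx
        simpa [dist_eq_norm] using hmem
    have h2 : ∫ x : EuclideanSpace ℝ (Fin n), φ (x - y) = ∫ x, φ x := integral_sub_right_eq_self φ y
    have h3 : ∫ x : EuclideanSpace ℝ (Fin n), φ x = 0 := by
      have hneg : ∀ x : EuclideanSpace ℝ (Fin n), φ (-x) = -φ x := by
        intro x
        by_cases hx : x ∈ closedBall (0 : E) ρ
        · have hx' : -x ∈ closedBall (0 : EuclideanSpace ℝ (Fin n)) ρ := by simpa [dist_eq_norm] using hx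
          rw [hφ, Set.indicator_of_mem hx', Set.indicator_of_mem hx, map_neg]
        · have hx' : -x ∉ closedBall (0 : EuclideanSpace ℝ (Fin n)) ρ := by
            intro hmem; apply hx; simpa [dist_eq_norm] using hmem
          rw [hφ, Set.indicator_of_notMem hx', Set.indicator_of_notMem hx, neg_zero]
      have := integral_neg_eq_self φ (volume : Measure (EuclideanSpace ℝ (Fin n)))
      have h4 : ∫ x : EuclideanSpace ℝ (Fin n), φ (-x) = -∫ x, φ x := by
        simp_rw [hneg]; exact integral_neg φ
      linarith [this, h4, this ▸ h4]
    rw [h1, h2, h3]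
  have hvol : volume (closedBall y ρ) = volume (closedBall (0 : EuclideanSpace ℝ (Fin n)) ρ) := by
    rw [Measure.addHaar_closedBall _ _ hρ, Measure.addHaar_closedBall _ _ hρ]
  rw [hsplit, hodd, setIntegral_const, zero_add, smul_eq_mul, measureReal_def, hvol]

lemma scaled_int {n : ℕ} {P : Set (EuclideanSpace ℝ (Fin n))}
    (f : EuclideanSpace ℝ (Fin n) → ℝ) (hfc : ContinuousOn f P) (hconv : ConvexOn ℝ P f)
    (hf0 : f 0 = 0) (hP0 : (0 : EuclideanSpace ℝ (Fin n)) ∈ P) {s : ℝ} (hs : 0 < s)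
    (hsub : closedBall (0 : EuclideanSpace ℝ (Fin n)) s ⊆ P)
    {c : ℝ} (hc0 : 0 < c) (hc1 : c ≤ 1) :
    ∫ x in closedBall (0 : EuclideanSpace ℝ (Fin n)) (c * s), f x ≤
      c ^ (n + 1) * ∫ x in closedBall (0 : EuclideanSpace ℝ (Fin n)) s, f x := by
  have hmaps : ∀ x ∈ closedBall (0 : EuclideanSpace ℝ (Fin n)) s, c • x ∈ P := by
    intro x hx
    apply hsub
    simp only [mem_closedBall, dist_zero_right] at hx ⊢
    calc ‖c • x‖ = ‖c‖ * ‖x‖ := norm_smul c x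
    _ ≤ 1 * s := by
        apply mul_le_mul (by rwa [Real.norm_eq_abs, abs_of_pos hc0]) hx (norm_nonneg x) one_pos.le
    _ = s := one_mul s
  have hptwise : ∀ x ∈ closedBall (0 : EuclideanSpace ℝ (Fin n)) s, f (c • x) ≤ c * f x := by
    intro x hx
    have h := hconv.2 (hsub hx) hP0 hc0.le (by linarith : (0:ℝ) ≤ 1 - c) (by ring)
    simpa [hf0] using h
  have hkey := Measure.setIntegral_comp_smul_of_pos (volume) f
    (closedBall (0 : EuclideanSpace ℝ (Fin n)) s) hc0
  rw [smul_closedBall c 0 hs.le, smul_zero, Real.norm_eq_abs, abs_of_pos hc0] at hkey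
  have hint1 : IntegrableOn (fun x => f (c • x))
      (closedBall (0 : EuclideanSpace ℝ (Fin n)) s) volume := by
    apply ContinuousOn.integrableOn_compact (isCompact_closedBall _ _)
    exact hfc.comp (continuous_const_smul c).continuousOn hmaps
  have hint2 : IntegrableOn f (closedBall (0 : EuclideanSpace ℝ (Fin n)) s) volume :=
    (hfc.mono hsub).integrableOn_compact (isCompact_closedBall _ _)
  have hmono : ∫ x in closedBall (0 : EuclideanSpace ℝ (Fin n)) s, f (c • x) ≤
      ∫ x in closedBall (0 : EuclideanSpace ℝ (Fin n)) s, c * f x := by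
    apply setIntegral_mono_on hint1 (hint2.const_mul c) measurableSet_closedBall hptwise
  rw [integral_const_mul] at hmono
  have hrank : Module.finrank ℝ (EuclideanSpace ℝ (Fin n)) = n := finrank_euclideanSpace_fin
  rw [hrank] at hkey
  have hcn : (0:ℝ) < c ^ n := pow_pos hc0 n
  calc ∫ x in closedBall (0 : EuclideanSpace ℝ (Fin n)) (c * s), f x
      = c ^ n * ∫ x in closedBall (0 : EuclideanSpace ℝ (Fin n)) s, f (c • x) := by
        rw [hkey, smul_eq_mul, ← mul_assoc, mul_inv_cancel₀ hcn.ne', one_mul]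
    _ ≤ c ^ n * (c * ∫ x in closedBall (0 : EuclideanSpace ℝ (Fin n)) s, f x) := by
        exact mul_le_mul_of_nonneg_left hmono hcn.le
    _ = c ^ (n + 1) * ∫ x in closedBall (0 : EuclideanSpace ℝ (Fin n)) s, f x := by ring


lemma helper_div_low {s V a b : ℝ} (hs : 0 < s) (hV : s * s = V)
    (h : -(a * s) ≤ V * b) : -(a / s) ≤ b := by
  subst hV
  have h2 : -a ≤ s * b := by nlinarith
  rw [neg_le, le_div_iff₀ hs]
  nlinarith

lemma helper_div_up {s V b A F D : ℝ} (hs : 0 < s) (hV : s * s = V)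
    (h : V * b ≤ A * F + D * s) : b ≤ A / V * F + D / s := by
  subst hV
  have h1 : b ≤ (A * F + D * s) / (s * s) := by
    rw [le_div_iff₀ (mul_pos hs hs)]
    nlinarith
  have h2 : (A * F + D * s) / (s * s) = A / (s * s) * F + D / s := by
    field_simp
  linarith

set_option maxHeartbeats 1000000 in
theorem normalised_convex_norm_inequality
    {n : ℕ} (P : Set (EuclideanSpace ℝ (Fin n)))
    (hPcomp : IsCompact P) (hPconv : Convex ℝ P) (hP0 : (0 : EuclideanSpace ℝ (Fin n)) ∈ interior P) :
    ∃ C : ℝ, 0 < C ∧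
      ∀ f : EuclideanSpace ℝ (Fin n) → ℝ,
        ContinuousOn f P → ConvexOn ℝ P f → (∀ x ∈ P, 0 ≤ f x) → f 0 = 0 →
        ∀ g : EuclideanSpace ℝ (Fin n) →ᵃ[ℝ] ℝ,
          -- g is the L²(P)-orthogonal projection of f onto affine functions:
          (∀ a : EuclideanSpace ℝ (Fin n) →ᵃ[ℝ] ℝ,
            ∫ x in P, (f x - g x) * a x = 0) →
          Real.sqrt (∫ x in P, f x ^ 2) ≤
            C * Real.sqrt (∫ x in P, (f x - g x) ^ 2) := by
  classical
  -- inner radius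
  obtain ⟨ε, hε0, hballε⟩ : ∃ ε > 0, ball (0 : EuclideanSpace ℝ (Fin n)) ε ⊆ interior P :=
    Metric.isOpen_iff.1 isOpen_interior 0 hP0
  set r : ℝ := ε / 4 with hrdef
  have hr0 : 0 < r := by positivity
  have h2rP : closedBall (0 : EuclideanSpace ℝ (Fin n)) (2 * r) ⊆ P := by
    refine subset_trans ?_ (hballε.trans interior_subset)
    refine closedBall_subset_ball ?_
    rw [hrdef]; linarith
  -- outer radius
  obtain ⟨R, hR2r, hPR⟩ : ∃ R, 2 * r < R ∧ P ⊆ closedBall (0 : EuclideanSpace ℝ (Fin n)) R :=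
    hPcomp.isBounded.subset_closedBall_lt (2 * r) 0
  have hR0 : 0 < R := lt_trans (by positivity) hR2r
  -- volume function
  set v : ℝ → ℝ := fun ρ => (volume (closedBall (0 : EuclideanSpace ℝ (Fin n)) ρ)).toReal
    with hvdef
  have hvpos : ∀ ρ : ℝ, 0 < ρ → 0 < v ρ := by
    intro ρ hρ
    rw [hvdef]
    exact ENNReal.toReal_pos (measure_closedBall_pos volume _ hρ).ne' measure_closedBall_lt_top.ne
  set volP : ℝ := (volume P).toReal with hvolPdef
  have hvolPnn : 0 ≤ volP := ENNReal.toReal_nonneg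
  set κ : ℝ := Real.sqrt volP * (1 + R / r) with hκdef
  have hκnn : 0 ≤ κ := by positivity
  set δ : ℝ := min r (r * Real.sqrt (v (2 * r)) / (κ + 1)) with hδdef
  have hsv2r : 0 < Real.sqrt (v (2 * r)) := Real.sqrt_pos.2 (hvpos _ (by linarith))
  have hδ0 : 0 < δ := lt_min hr0 (by positivity)
  have hδr : δ ≤ r := min_le_left _ _
  have hδκ : δ ≤ r * Real.sqrt (v (2 * r)) / (κ + 1) := min_le_right _ _
  have hsvr : 0 < Real.sqrt (v r) := Real.sqrt_pos.2 (hvpos _ hr0)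
  have hsvδ : 0 < Real.sqrt (v δ) := Real.sqrt_pos.2 (hvpos _ hδ0)
  set C : ℝ := 2 * (1 + κ / Real.sqrt (v r) + κ / Real.sqrt (v δ)) with hCdef
  have hC0 : 0 < C := by positivity
  refine ⟨C, hC0, ?_⟩
  intro f hfc hconv hfnn hf0 g horth
  -- basic measurability / integrability
  have hPmeas : MeasurableSet P := hPcomp.isClosed.measurableSet
  have hgc : Continuous g := g.continuous_of_finiteDimensional
  have hIf : IntegrableOn f P volume := hfc.integrableOn_compact hPcomp
  have hIg : IntegrableOn (fun x => (g x : ℝ)) P volume :=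
    hgc.continuousOn.integrableOn_compact hPcomp
  have hIf2 : IntegrableOn (fun x => f x ^ 2) P volume :=
    (hfc.pow 2).integrableOn_compact hPcomp
  have hIg2 : IntegrableOn (fun x => (g x : ℝ) ^ 2) P volume :=
    ((hgc.continuousOn).pow 2).integrableOn_compact hPcomp
  have hIfg : IntegrableOn (fun x => f x - g x) P volume :=
    (hfc.sub hgc.continuousOn).integrableOn_compact hPcomp
  have hIfg2 : IntegrableOn (fun x => (f x - g x) ^ 2) P volume :=
    ((hfc.sub hgc.continuousOn).pow 2).integrableOn_compact hPcomp
  have hIfgg : IntegrableOn (fun x => (f x - g x) * g x) P volume :=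
    ((hfc.sub hgc.continuousOn).mul hgc.continuousOn).integrableOn_compact hPcomp
  set D : ℝ := Real.sqrt (∫ x in P, (f x - g x) ^ 2) with hDdef
  set F : ℝ := Real.sqrt (∫ x in P, f x ^ 2) with hFdef
  have hDnn : 0 ≤ D := Real.sqrt_nonneg _
  have hFnn : 0 ≤ F := Real.sqrt_nonneg _
  have hD2 : D ^ 2 = ∫ x in P, (f x - g x) ^ 2 :=
    Real.sq_sqrt (integral_nonneg fun x => sq_nonneg _)
  have hF2 : F ^ 2 = ∫ x in P, f x ^ 2 :=
    Real.sq_sqrt (integral_nonneg fun x => sq_nonneg _)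
  -- translation invariance of ball volumes
  have hvtrans : ∀ (y : EuclideanSpace ℝ (Fin n)) (ρ : ℝ), 0 ≤ ρ →
      (volume (closedBall y ρ)).toReal = v ρ := by
    intro y ρ hρ
    rw [hvdef]
    congr 1
    rw [Measure.addHaar_closedBall _ _ hρ, Measure.addHaar_closedBall _ _ hρ]
  -- Cauchy-Schwarz on subsets: |∫_B h| ≤ sqrt (vol B) * sqrt (∫_P h²)
  have hCSset : ∀ (h : EuclideanSpace ℝ (Fin n) → ℝ), ContinuousOn h P →
      IntegrableOn (fun x => h x ^ 2) P volume →
      ∀ (y : EuclideanSpace ℝ (Fin n)) (ρ : ℝ), 0 < ρ → closedBall y ρ ⊆ P →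
      |∫ x in closedBall y ρ, h x| ≤
        Real.sqrt (∫ x in P, h x ^ 2) * Real.sqrt (v ρ) := by
    intro h hhc hIh2 y ρ hρ0 hsub
    have hBmeas : MeasurableSet (closedBall y ρ) := measurableSet_closedBall
    have hIB : Integrable (fun x => h x) (volume.restrict (closedBall y ρ)) :=
      (hhc.mono hsub).integrableOn_compact (isCompact_closedBall _ _)
    have hIB2 : Integrable (fun x => h x ^ 2) (volume.restrict (closedBall y ρ)) :=
      ((hhc.pow 2).mono hsub).integrableOn_compact (isCompact_closedBall _ _)
    have hI1 : Integrable (fun _ : EuclideanSpace ℝ (Fin n) => (1 : ℝ) ^ 2)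
        (volume.restrict (closedBall y ρ)) := by
      simp only [one_pow]
      exact integrableOn_const measure_closedBall_lt_top.ne
    have hIB1 : Integrable (fun x => h x * 1) (volume.restrict (closedBall y ρ)) := by
      simpa using hIB
    have hcs := cs_integral (volume.restrict (closedBall y ρ)) h (fun _ => 1) hIB2 hI1 hIB1
    simp only [mul_one, one_pow] at hcs
    have hone : ∫ _ in closedBall y ρ, (1 : ℝ) = v ρ := by
      rw [setIntegral_const, smul_eq_mul, mul_one, measureReal_def, hvtrans y ρ hρ0.le]
    rw [hone] at hcs
    have hmono : ∫ x in closedBall y ρ, h x ^ 2 ≤ ∫ x in P, h x ^ 2 := by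
      apply setIntegral_mono_set hIh2 (Filter.Eventually.of_forall fun x => sq_nonneg _)
      exact Filter.Eventually.of_forall hsub
    have h2 : (∫ x in closedBall y ρ, h x) ^ 2 ≤ (∫ x in P, h x ^ 2) * v ρ := by
      calc (∫ x in closedBall y ρ, h x) ^ 2 ≤ (∫ x in closedBall y ρ, h x ^ 2) * v ρ := hcs
        _ ≤ (∫ x in P, h x ^ 2) * v ρ := by
            apply mul_le_mul_of_nonneg_right hmono
            exact ENNReal.toReal_nonneg
    calc |∫ x in closedBall y ρ, h x| ≤ Real.sqrt ((∫ x in P, h x ^ 2) * v ρ) :=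
          Real.abs_le_sqrt h2
      _ = Real.sqrt (∫ x in P, h x ^ 2) * Real.sqrt (v ρ) :=
          Real.sqrt_mul (integral_nonneg fun x => sq_nonneg _) _
  -- main ball estimate for g
  have hEst : ∀ (y : EuclideanSpace ℝ (Fin n)) (ρ : ℝ), 0 < ρ → closedBall y ρ ⊆ P →
      (-(D * Real.sqrt (v ρ)) ≤ v ρ * g y ∧
        v ρ * g y ≤ (∫ x in closedBall y ρ, f x) + D * Real.sqrt (v ρ)) := by
    intro y ρ hρ0 hsub
    have hBmeas : MeasurableSet (closedBall y ρ) := measurableSet_closedBall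
    have hIfB : IntegrableOn f (closedBall y ρ) volume :=
      (hfc.mono hsub).integrableOn_compact (isCompact_closedBall _ _)
    have hIgB : IntegrableOn (fun x => (g x : ℝ)) (closedBall y ρ) volume :=
      hgc.continuousOn.integrableOn_compact (isCompact_closedBall _ _)
    have havg : ∫ x in closedBall y ρ, (g x : ℝ) = v ρ * g y := affine_avg g y hρ0.le
    have hsplit : ∫ x in closedBall y ρ, (f x - g x) =
        (∫ x in closedBall y ρ, f x) - ∫ x in closedBall y ρ, (g x : ℝ) :=
      integral_sub hIfB hIgB
    have hcs := hCSset (fun x => f x - g x) (hfc.sub hgc.continuousOn) hIfg2 y ρ hρ0 hsub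
    rw [← hDdef] at hcs
    have hfB : 0 ≤ ∫ x in closedBall y ρ, f x :=
      setIntegral_nonneg hBmeas fun x hx => hfnn x (hsub hx)
    have habs := abs_le.1 hcs
    constructor
    · linarith only [habs.1, habs.2, hsplit, havg, hfB]
    · linarith only [habs.1, habs.2, hsplit, havg, hfB]
  set q : ℝ := D / Real.sqrt (v r) with hqdef
  set p : ℝ := D / Real.sqrt (v δ) with hpdef
  have hqnn : 0 ≤ q := div_nonneg hDnn (Real.sqrt_nonneg _)
  have hpnn : 0 ≤ p := div_nonneg hDnn (Real.sqrt_nonneg _)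
  -- lower bound for g at points of the inner ball
  have hglow : ∀ y : EuclideanSpace ℝ (Fin n), ‖y‖ ≤ r → -q ≤ g y := by
    intro y hy
    have hsub : closedBall y r ⊆ P := by
      refine subset_trans ?_ h2rP
      intro z hz
      simp only [mem_closedBall] at hz ⊢
      calc dist z 0 ≤ dist z y + dist y 0 := dist_triangle _ _ _
        _ ≤ r + r := add_le_add hz (by simpa [dist_zero_right] using hy)
        _ = 2 * r := by ring
    have hlow := (hEst y r hr0 hsub).1
    have hvr : Real.sqrt (v r) * Real.sqrt (v r) = v r :=
      Real.mul_self_sqrt (hvpos r hr0).le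
    rw [hqdef]
    exact helper_div_low hsvr hvr hlow
  -- upper bound for g at 0
  set cF : ℝ := (δ / (2 * r)) ^ (n + 1) * Real.sqrt (v (2 * r)) / v δ with hcFdef
  have hcFnn : 0 ≤ cF := by positivity
  have hvδeq : Real.sqrt (v δ) * Real.sqrt (v δ) = v δ := Real.mul_self_sqrt (hvpos δ hδ0).le
  have hg0up : g 0 ≤ cF * F + p := by
    have hsubδ : closedBall (0 : EuclideanSpace ℝ (Fin n)) δ ⊆ P :=
      subset_trans (closedBall_subset_closedBall (by linarith)) h2rP
    have hup := (hEst 0 δ hδ0 hsubδ).2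
    have h2r0 : (0:ℝ) < 2 * r := by linarith
    have hscale : ∫ x in closedBall (0 : EuclideanSpace ℝ (Fin n)) δ, f x ≤
        (δ / (2 * r)) ^ (n + 1) * ∫ x in closedBall (0 : EuclideanSpace ℝ (Fin n)) (2 * r), f x := by
      have hc0 : 0 < δ / (2 * r) := by positivity
      have hc1 : δ / (2 * r) ≤ 1 := by rw [div_le_one h2r0]; linarith
      have hs := scaled_int f hfc hconv hf0 (h2rP (mem_closedBall_self (by linarith)))
        h2r0 h2rP hc0 hc1
      rwa [div_mul_cancel₀ _ h2r0.ne'] at hs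
    have hfB2r : ∫ x in closedBall (0 : EuclideanSpace ℝ (Fin n)) (2 * r), f x ≤
        F * Real.sqrt (v (2 * r)) := by
      have hcs2 := hCSset f hfc hIf2 0 (2 * r) h2r0 h2rP
      rw [← hFdef] at hcs2
      exact le_trans (le_abs_self _) hcs2
    have h1 : ∫ x in closedBall (0 : EuclideanSpace ℝ (Fin n)) δ, f x ≤
        (δ / (2 * r)) ^ (n + 1) * Real.sqrt (v (2 * r)) * F := by
      refine le_trans (le_trans hscale (mul_le_mul_of_nonneg_left hfB2r (by positivity))) ?_
      exact le_of_eq (by ring)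
    have hcomb : v δ * g 0 ≤
        (δ / (2 * r)) ^ (n + 1) * Real.sqrt (v (2 * r)) * F + D * Real.sqrt (v δ) := by
      linarith only [hup, h1]
    rw [hcFdef, hpdef]
    exact helper_div_up hsvδ hvδeq hcomb
  -- bound on the linear part
  have hlinb : ∀ w : EuclideanSpace ℝ (Fin n), ‖w‖ ≤ r → |g.linear w| ≤ q + g 0 := by
    intro w hw
    have hdec : ∀ x : EuclideanSpace ℝ (Fin n), g x = g.linear x + g 0 := by
      intro x
      conv_lhs => rw [AffineMap.decomp g]
      rfl
    have h1 : -q ≤ g w := hglow w hw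
    have h2 : -q ≤ g (-w) := hglow (-w) (by simpa using hw)
    rw [hdec w] at h1
    rw [hdec (-w), map_neg] at h2
    rw [abs_le]
    constructor <;> linarith
  -- global pointwise bound for g on P
  set G : ℝ := (1 + R / r) * (q + p + cF * F) with hGdef
  have hGnn : 0 ≤ G := by
    rw [hGdef]
    exact mul_nonneg (by positivity)
      (add_nonneg (add_nonneg hqnn hpnn) (mul_nonneg hcFnn hFnn))
  have hgbound : ∀ x ∈ P, |g x| ≤ G := by
    intro x hx
    have hxR : ‖x‖ ≤ R := by simpa [dist_zero_right] using hPR hx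
    have hdec : g x = g.linear x + g 0 := by
      conv_lhs => rw [AffineMap.decomp g]
      rfl
    have hw : ‖(r / R) • x‖ ≤ r := by
      rw [norm_smul, Real.norm_eq_abs, abs_of_pos (by positivity : (0:ℝ) < r / R)]
      calc r / R * ‖x‖ ≤ r / R * R := by
            exact mul_le_mul_of_nonneg_left hxR (by positivity)
        _ = r := by field_simp
    have hlinw := hlinb ((r / R) • x) hw
    have hsmul : g.linear ((r / R) • x) = (r / R) * g.linear x := by
      rw [g.linear.map_smul, smul_eq_mul]
    rw [hsmul, abs_mul] at hlinw
    have habs : |(r / R)| = r / R := abs_of_pos (by positivity)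
    rw [habs] at hlinw
    have hlinx : |g.linear x| ≤ (R / r) * (q + g 0) := by
      rw [← mul_le_mul_iff_right₀ (show (0:ℝ) < r / R by positivity)]
      calc (r / R) * |g.linear x| ≤ q + g 0 := hlinw
        _ = (r / R) * ((R / r) * (q + g 0)) := by field_simp
    have hg0abs : |g 0| ≤ q + (cF * F + p) := by
      rw [abs_le]
      constructor
      · have hg00 := hglow 0 (by simp [hr0.le])
        linarith only [hg00, mul_nonneg hcFnn hFnn, hpnn]
      · linarith only [hg0up, hqnn]
    have hg0b : g 0 ≤ cF * F + p := hg0up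
    calc |g x| = |g.linear x + g 0| := by rw [hdec]
      _ ≤ |g.linear x| + |g 0| := abs_add_le _ _
      _ ≤ (R / r) * (q + g 0) + (q + (cF * F + p)) := add_le_add hlinx hg0abs
      _ ≤ (R / r) * (q + (cF * F + p)) + (q + (cF * F + p)) := by
          have : q + g 0 ≤ q + (cF * F + p) := by linarith only [hg0b]
          exact add_le_add_left (mul_le_mul_of_nonneg_left this (by positivity)) _
      _ = G := by rw [hGdef]; ring
  -- L² bound for g on P
  have hIntg2nn : 0 ≤ ∫ x in P, (g x : ℝ) ^ 2 := integral_nonneg fun x => sq_nonneg _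
  have hEg : Real.sqrt (∫ x in P, (g x : ℝ) ^ 2) ≤ Real.sqrt volP * G := by
    have h1 : ∫ x in P, (g x : ℝ) ^ 2 ≤ ∫ x in P, G ^ 2 := by
      apply setIntegral_mono_on hIg2
        (integrableOn_const hPcomp.measure_lt_top.ne) hPmeas
      intro x hx
      have hb := hgbound x hx
      rw [← sq_abs]
      exact pow_le_pow_left₀ (abs_nonneg _) hb 2
    have h2 : ∫ _x in P, (G : ℝ) ^ 2 = G ^ 2 * volP := by
      rw [setIntegral_const, smul_eq_mul, measureReal_def, hvolPdef]; ring
    calc Real.sqrt (∫ x in P, (g x : ℝ) ^ 2) ≤ Real.sqrt (G ^ 2 * volP) :=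
          Real.sqrt_le_sqrt (by linarith only [h1, h2])
      _ = G * Real.sqrt volP := by
          rw [Real.sqrt_mul (sq_nonneg _), Real.sqrt_sq hGnn]
      _ = Real.sqrt volP * G := mul_comm _ _
  -- Pythagoras using the orthogonality hypothesis
  have hpyth : ∫ x in P, f x ^ 2 =
      (∫ x in P, (f x - g x) ^ 2) + ∫ x in P, (g x : ℝ) ^ 2 := by
    have hIa : IntegrableOn (fun x => 2 * ((f x - g x) * g x) + (g x : ℝ) ^ 2) P volume :=
      (hIfgg.const_mul 2).add hIg2
    have e : ∫ x in P, f x ^ 2 =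
        ∫ x in P, ((f x - g x) ^ 2 + (2 * ((f x - g x) * g x) + (g x : ℝ) ^ 2)) :=
      setIntegral_congr_fun hPmeas fun x _ => by ring
    rw [e, integral_add hIfg2 hIa, integral_add (hIfgg.const_mul 2) hIg2,
      integral_const_mul, horth g]
    ring
  have hFDE : F ≤ D + Real.sqrt (∫ x in P, (g x : ℝ) ^ 2) := by
    have hEg2 : (Real.sqrt (∫ x in P, (g x : ℝ) ^ 2)) ^ 2 = ∫ x in P, (g x : ℝ) ^ 2 :=
      Real.sq_sqrt hIntg2nn
    have h1 : F ^ 2 ≤ (D + Real.sqrt (∫ x in P, (g x : ℝ) ^ 2)) ^ 2 := by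
      rw [hF2, hpyth]
      nlinarith only [hD2, hEg2, mul_nonneg hDnn (Real.sqrt_nonneg (∫ x in P, (g x : ℝ) ^ 2))]
    calc F = Real.sqrt (F ^ 2) := (Real.sqrt_sq hFnn).symm
      _ ≤ Real.sqrt ((D + Real.sqrt (∫ x in P, (g x : ℝ) ^ 2)) ^ 2) := Real.sqrt_le_sqrt h1
      _ = D + Real.sqrt (∫ x in P, (g x : ℝ) ^ 2) :=
          Real.sqrt_sq (add_nonneg hDnn (Real.sqrt_nonneg _))
  -- value of cF
  set b : ℝ := (volume (ball (0 : EuclideanSpace ℝ (Fin n)) 1)).toReal with hbdef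
  have hvball : ∀ ρ : ℝ, 0 ≤ ρ → v ρ = ρ ^ n * b := by
    intro ρ hρ
    rw [hvdef, hbdef]
    simp only
    rw [Measure.addHaar_closedBall _ _ hρ, ENNReal.toReal_mul,
      ENNReal.toReal_ofReal (pow_nonneg hρ _), finrank_euclideanSpace_fin]
  have hb0 : 0 < b := by
    have hvr := hvpos r hr0
    rw [hvball r hr0.le] at hvr
    rcases mul_pos_iff.1 hvr with ⟨_, h⟩ | ⟨h, _⟩
    · exact h
    · linarith [pow_pos hr0 n]
  have hv2req : Real.sqrt (v (2 * r)) * Real.sqrt (v (2 * r)) = (2 * r) ^ n * b := by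
    rw [Real.mul_self_sqrt (hvpos _ (by linarith)).le, hvball (2 * r) (by linarith)]
  have hcFval : cF = δ / (2 * r * Real.sqrt (v (2 * r))) := by
    rw [hcFdef, hvball δ hδ0.le]
    have h2r0 : (0 : ℝ) < 2 * r := by linarith
    rw [div_pow, div_mul_eq_mul_div, div_div,
      div_eq_div_iff (by positivity) (by positivity)]
    have hps : (2 * r) ^ (n + 1) = (2 * r) ^ n * (2 * r) := pow_succ _ _
    calc δ ^ (n + 1) * Real.sqrt (v (2 * r)) * (2 * r * Real.sqrt (v (2 * r)))
        = δ ^ (n + 1) * (2 * r) * (Real.sqrt (v (2 * r)) * Real.sqrt (v (2 * r))) := by ring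
      _ = δ ^ (n + 1) * (2 * r) * ((2 * r) ^ n * b) := by rw [hv2req]
      _ = δ * ((2 * r) ^ (n + 1) * (δ ^ n * b)) := by rw [hps]; ring
  have hκcF : κ * cF ≤ 1 / 2 := by
    rw [hcFval]
    have hκ1 : (0 : ℝ) < κ + 1 := by linarith
    have h1 : κ * δ ≤ κ * (r * Real.sqrt (v (2 * r)) / (κ + 1)) :=
      mul_le_mul_of_nonneg_left hδκ hκnn
    have h2 : κ * (r * Real.sqrt (v (2 * r)) / (κ + 1)) ≤ r * Real.sqrt (v (2 * r)) := by
      rw [mul_div_assoc', div_le_iff₀ hκ1]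
      nlinarith only [mul_pos hr0 hsv2r, hκnn]
    rw [mul_div_assoc', div_le_iff₀ (by positivity)]
    nlinarith only [h1, h2]
  -- final combination
  have h5 : Real.sqrt volP * G = κ * (q + p) + (κ * cF) * F := by
    rw [hGdef, hκdef]; ring
  have hfinal : F ≤ D + κ * (q + p) + (κ * cF) * F := by
    linarith only [hFDE, hEg, h5]
  have h6 : (κ * cF) * F ≤ (1 / 2) * F :=
    mul_le_mul_of_nonneg_right hκcF hFnn
  have h7 : C * D = 2 * D + 2 * (κ * q) + 2 * (κ * p) := by
    rw [hCdef, hqdef, hpdef]; ring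
  linarith only [hfinal, h6, h7, hFnn]
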